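/- Fix an integer n > 1. Every global minimizer (a1,a2,b1,b2,α) of Problem (Q) satisfies |b1| ≤ a1. -/

import Mathlib

/-- Objective of Problem (Q). -/
noncomputable def FQ (n : ℕ) (a1 a2 b1 b2 α : ℝ) : ℝ :=
  ((n : ℝ) - 1) * Real.sqrt (2 * (a1 ^ 2 + b1 ^ 2) + 2 * |a1 ^ 2 - b1 ^ 2|) +
    2 * Real.sqrt ((a1 + n * a2) ^ 2 + n * α ^ 2)

/-- Feasible set of Problem (Q). -/
def FeasQ (n : ℕ) (a1 a2 b1 b2 α : ℝ) : Prop :=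
  1 ≤ a1 ∧ b1 + b2 - α + 1 ≤ a1 + a2 + α ∧ a1 + b1 + n * (a2 + b2) = 0

lemma sqrt_shift (x nr α t : ℝ) (hn : 0 ≤ nr) :
    Real.sqrt (x ^ 2 + nr * (α + t) ^ 2) ≤
      Real.sqrt (x ^ 2 + nr * α ^ 2) + Real.sqrt nr * |t| := by
  have hs0 : 0 ≤ Real.sqrt (x ^ 2 + nr * α ^ 2) := Real.sqrt_nonneg _
  have hsn0 : 0 ≤ Real.sqrt nr := Real.sqrt_nonneg _
  have hns : Real.sqrt nr ^ 2 = nr := Real.sq_sqrt hn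
  have hsq : Real.sqrt (x ^ 2 + nr * α ^ 2) ^ 2 = x ^ 2 + nr * α ^ 2 :=
    Real.sq_sqrt (by positivity)
  have h2 : Real.sqrt nr * |α| ≤ Real.sqrt (x ^ 2 + nr * α ^ 2) := by
    have : Real.sqrt nr * |α| = Real.sqrt (nr * α ^ 2) := by
      rw [Real.sqrt_mul hn, Real.sqrt_sq_eq_abs]
    rw [this]
    exact Real.sqrt_le_sqrt (by nlinarith [sq_nonneg x])
  have key : nr * α * t ≤ Real.sqrt (x ^ 2 + nr * α ^ 2) * (Real.sqrt nr * |t|) := by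
    have h3 : nr * α * t ≤ nr * |α| * |t| := by
      calc nr * α * t ≤ |nr * α * t| := le_abs_self _
        _ = nr * |α| * |t| := by rw [abs_mul, abs_mul, abs_of_nonneg hn]
    have h4 : nr * |α| * |t| = (Real.sqrt nr * |α|) * (Real.sqrt nr * |t|) := by
      linear_combination (-(|α| * |t|)) * hns
    rw [h4] at h3
    exact h3.trans (mul_le_mul_of_nonneg_right h2 (by positivity))
  have h1 : x ^ 2 + nr * (α + t) ^ 2 ≤
      (Real.sqrt (x ^ 2 + nr * α ^ 2) + Real.sqrt nr * |t|) ^ 2 := by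
    nlinarith [sq_abs t, key, hsq, hns]
  calc Real.sqrt (x ^ 2 + nr * (α + t) ^ 2)
      ≤ Real.sqrt ((Real.sqrt (x ^ 2 + nr * α ^ 2) + Real.sqrt nr * |t|) ^ 2) :=
        Real.sqrt_le_sqrt h1
    _ = _ := Real.sqrt_sq (by positivity)

set_option maxHeartbeats 1000000 in
/-- Step 1 in the proof of Theorem 2: every global minimizer of Problem (Q)
satisfies `|b1| ≤ a1`. -/
theorem Q_minimizer_abs_b1_le_a1 (n : ℕ) (hn : 1 < n)
    (a1 a2 b1 b2 α : ℝ)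
    (hfeas : FeasQ n a1 a2 b1 b2 α)
    (hmin : ∀ a1' a2' b1' b2' α' : ℝ,
      FeasQ n a1' a2' b1' b2' α' → FQ n a1 a2 b1 b2 α ≤ FQ n a1' a2' b1' b2' α') :
    |b1| ≤ a1 := by
  by_contra hcon
  push_neg at hcon
  obtain ⟨ha1, hineq, heq⟩ := hfeas
  have hn1 : (1:ℝ) < (n:ℝ) := by exact_mod_cast hn
  have hn0 : (0:ℝ) < (n:ℝ) := by linarith
  set d : ℝ := |b1| - a1 with hd
  have hd0 : 0 < d := by simp only [hd]; linarith
  set b1' : ℝ := if 0 ≤ b1 then a1 else -a1 with hb1'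
  have habs : |b1'| = a1 := by
    rcases le_or_gt 0 b1 with h | h
    · simp only [hb1', if_pos h]; exact abs_of_nonneg (by linarith)
    · simp only [hb1', if_neg (not_le.mpr h), abs_neg]; exact abs_of_nonneg (by linarith)
  have hdiff : b1' - b1 ≤ d := by
    rcases le_or_gt 0 b1 with h | h
    · have : |b1| = b1 := abs_of_nonneg h
      simp only [hb1', if_pos h, hd, this]; linarith
    · have : |b1| = -b1 := abs_of_neg h
      simp only [hb1', if_neg (not_le.mpr h), hd, this]; linarith
  set t : ℝ := d * ((n:ℝ) - 1) / (2 * n) with htdef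
  have ht0 : 0 < t := div_pos (mul_pos hd0 (by linarith)) (by linarith)
  have ht : 2 * (n:ℝ) * t = d * ((n:ℝ) - 1) := by
    rw [htdef]; field_simp
  set α' : ℝ := α + t with hα'
  set b2' : ℝ := b2 + (b1 - b1') / n with hb2'def
  clear_value d b1' t α' b2'
  have hb2' : (n:ℝ) * b2' = n * b2 + (b1 - b1') := by
    rw [hb2'def]; field_simp
  -- feasibility of the competitor
  have hfeq : a1 + b1' + (n:ℝ) * (a2 + b2') = 0 := by
    have h5 : a1 + b1' + (n:ℝ) * (a2 + b2') = a1 + b1 + n * (a2 + b2) := by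
      linear_combination hb2'
    rw [h5, heq]
  have hfineq : b1' + b2' - α' + 1 ≤ a1 + a2 + α' := by
    have hn' : (0:ℝ) < (n:ℝ) := hn0
    have key : (n:ℝ) * (b1' + b2' - α' + 1) ≤ n * (a1 + a2 + α') := by
      nlinarith [mul_le_mul_of_nonneg_left hineq hn0.le,
        mul_le_mul_of_nonneg_left hdiff (by linarith : (0:ℝ) ≤ (n:ℝ) - 1),
        hb2', ht]
    exact le_of_mul_le_mul_left key hn0
  -- the first sqrt terms
  have hb1sq : a1 ^ 2 < b1 ^ 2 := by
    nlinarith [abs_nonneg b1, sq_abs b1]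
  have e_old : Real.sqrt (2 * (a1 ^ 2 + b1 ^ 2) + 2 * |a1 ^ 2 - b1 ^ 2|) = 2 * |b1| := by
    rw [abs_of_nonpos (by linarith : a1 ^ 2 - b1 ^ 2 ≤ 0)]
    rw [show 2 * (a1 ^ 2 + b1 ^ 2) + 2 * -(a1 ^ 2 - b1 ^ 2) = (2 * |b1|) ^ 2 by
      rw [mul_pow, sq_abs]; ring]
    exact Real.sqrt_sq (by positivity)
  have hb1'sq : b1' ^ 2 = a1 ^ 2 := by
    rw [← sq_abs b1', habs]
  have e_new : Real.sqrt (2 * (a1 ^ 2 + b1' ^ 2) + 2 * |a1 ^ 2 - b1' ^ 2|) = 2 * a1 := by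
    rw [hb1'sq]
    rw [show 2 * (a1 ^ 2 + a1 ^ 2) + 2 * |a1 ^ 2 - a1 ^ 2| = (2 * a1) ^ 2 by
      simp; ring]
    exact Real.sqrt_sq (by linarith)
  -- second term bound
  have hshift := sqrt_shift (a1 + n * a2) n α t hn0.le
  rw [abs_of_pos ht0] at hshift
  have hsn : Real.sqrt n ≤ (n:ℝ) := by
    nlinarith [Real.sq_sqrt hn0.le, Real.sqrt_nonneg (n:ℝ), sq_nonneg (Real.sqrt (n:ℝ) - 1)]
  have hb1abs : |b1| = a1 + d := by simp [hd]
  have hfin : ((n:ℝ) - 1) * (2 * a1) + 2 * (Real.sqrt n * t) < ((n:ℝ) - 1) * (2 * |b1|) := by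
    rw [hb1abs]
    have h1 : Real.sqrt n * t ≤ (n:ℝ) * t := mul_le_mul_of_nonneg_right hsn ht0.le
    have hp : 0 < d * ((n:ℝ) - 1) := mul_pos hd0 (by linarith)
    linarith [h1, ht, hp]
  have hlt : FQ n a1 a2 b1' b2' α' < FQ n a1 a2 b1 b2 α := by
    unfold FQ
    rw [e_new, e_old, hα']
    have h2 : 2 * Real.sqrt ((a1 + n * a2) ^ 2 + n * (α + t) ^ 2) ≤
        2 * Real.sqrt ((a1 + n * a2) ^ 2 + n * α ^ 2) + 2 * (Real.sqrt n * t) := by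
      linarith
    linarith
  have := hmin a1 a2 b1' b2' α' ⟨ha1, hfineq, hfeq⟩
  linarith
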